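/- Given a finite sequence of users sorted greedily by decreasing marginal density V_i(S_{i−1})/b_i for a monotone submodular function V, if the greedy proportional-share rule with budget B'/2 selects the first l users and with budget B' selects the first k users (l ≤ k), then V(S_l) ≥ V(S_k)/2. -/
import Mathlib


/-- Greedy proportional-share with budget `B'/2` selecting the first `l` users and with
budget `B'` selecting the first `k` users yields `V(S_l) ≥ V(S_k)/2`. -/
theorem proportional_share_half_budget (n : ℕ)
    (V : Finset (Fin n) → ℝ) (b : ℕ → ℝ) (B' : ℝ)
    (S : ℕ → Finset (Fin n))
    (hS : ∀ i : ℕ, S i = Finset.univ.filter (fun x : Fin n => (x : ℕ) < i))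
    (hV0 : V ∅ = 0)
    (hmono : ∀ A B : Finset (Fin n), A ⊆ B → V A ≤ V B)
    (hsubmod : ∀ (X Y : Finset (Fin n)) (x : Fin n), X ⊆ Y → x ∉ Y →
      V (insert x Y) - V Y ≤ V (insert x X) - V X)
    (hb : ∀ i, 0 < b i) (hB : 0 < B')
    (l k : ℕ) (hl : 1 ≤ l) (hlk : l < k) (hkn : k ≤ n)
    -- marginal densities are non-increasing
    (hsort : ∀ i, 1 ≤ i → i < n →
      (V (S (i + 1)) - V (S i)) / b (i + 1) ≤ (V (S i) - V (S (i - 1))) / b i)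
    -- proportional-share selection condition with budget B' holds up to k
    (hsel : ∀ i, 1 ≤ i → i ≤ k →
      b i ≤ (V (S i) - V (S (i - 1))) * B' / V (S i))
    -- l is the stopping index for budget B'/2
    (hl1 : 2 * V (S l) / B' ≤ (V (S l) - V (S (l - 1))) / b l)
    (hl2 : (V (S (l + 1)) - V (S l)) / b (l + 1) ≤ 2 * V (S l) / B')
    -- k is the stopping index for budget B'
    (hk1 : V (S k) / B' ≤ (V (S k) - V (S (k - 1))) / b k) :
    V (S k) / 2 ≤ V (S l) := by
  have key : ∀ m, l + 1 ≤ m → m ≤ k →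
      (V (S m) - V (S (m - 1))) / b m ≤ (V (S (l + 1)) - V (S l)) / b (l + 1) := by
    intro m
    induction m with
    | zero => omega
    | succ j ih =>
      intro h1 h2
      rcases Nat.lt_or_ge (l + 1) (j + 1) with h | h
      · have hj := ih (by omega) (by omega)
        have hs := hsort j (by omega) (by omega)
        have : (j + 1) - 1 = j := by omega
        rw [this]
        exact le_trans hs hj
      · have hjl : j + 1 = l + 1 := by omega
        rw [hjl]
        simp
  have hchain : V (S k) / B' ≤ 2 * V (S l) / B' :=
    le_trans hk1 (le_trans (key k (by omega) le_rfl) hl2)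
  have := (div_le_div_iff_of_pos_right hB).mp hchain
  linarith
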